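/- Let n ≡ 0 (mod 4) and let d be any divisor of n/4. If x is a complex number with x^n = 1, then ∑_{q ∈ G_n^1(d)} i x^q − ∑_{q ∈ G_n^3(d)} i x^q is an integer. -/

import Mathlib

open Finset

/-- `G_n^r(d) = {dk : k ≡ r (mod 4), gcd(dk, n) = d}` (as a subset of `{1,…,n-1}`). -/
def Grset (n d r : ℕ) : Finset ℕ :=
  (Finset.range n).filter (fun m => d ∣ m ∧ (m / d) % 4 = r ∧ Nat.gcd m n = d)


lemma moeb_sum (m : ℕ) (hm : 0 < m) :
    ∑ e ∈ m.divisors, ((ArithmeticFunction.moebius e : ℤ) : ℂ) = if m = 1 then 1 else 0 := by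
  have h := congrArg (fun f => f m) ArithmeticFunction.moebius_mul_coe_zeta
  simp only [ArithmeticFunction.coe_mul_zeta_apply, ArithmeticFunction.one_apply] at h
  rw [show (∑ e ∈ m.divisors, ((ArithmeticFunction.moebius e : ℤ) : ℂ))
      = ((∑ e ∈ m.divisors, ArithmeticFunction.moebius e : ℤ) : ℂ) by push_cast; rfl, h]
  split <;> simp

lemma ram (N : ℕ) (hN : 0 < N) (z : ℂ) (hz : z ^ N = 1) :
    ∃ m : ℤ, ∑ k ∈ (range N).filter (fun k => Nat.gcd k N = 1), z ^ k = (m : ℂ) := by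
  refine ⟨∑ e ∈ N.divisors, ArithmeticFunction.moebius e * (if z ^ e = 1 then ((N / e : ℕ) : ℤ) else 0), ?_⟩
  have key : ∀ k ∈ range N,
      (if Nat.gcd k N = 1 then z ^ k else 0)
        = ∑ e ∈ N.divisors.filter (· ∣ k), ((ArithmeticFunction.moebius e : ℤ) : ℂ) * z ^ k := by
    intro k _
    have hdiv : N.divisors.filter (· ∣ k) = (Nat.gcd k N).divisors := by
      ext e
      simp only [Nat.mem_divisors, mem_filter, Nat.dvd_gcd_iff]
      constructor
      · rintro ⟨⟨h1, h2⟩, h3⟩; exact ⟨⟨h3, h1⟩, Nat.gcd_ne_zero_right h2⟩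
      · rintro ⟨⟨h1, h2⟩, _⟩; exact ⟨⟨h2, hN.ne'⟩, h1⟩
    rw [hdiv, ← Finset.sum_mul, moeb_sum _ (Nat.gcd_pos_of_pos_right _ hN)]
    split <;> simp
  rw [Finset.sum_filter, Finset.sum_congr rfl key]
  simp only [Finset.sum_filter]
  rw [Finset.sum_comm, Int.cast_sum]
  refine Finset.sum_congr rfl fun e he => ?_
  obtain ⟨hedvd, -⟩ := Nat.mem_divisors.mp he
  have hepos : 0 < e := Nat.pos_of_dvd_of_pos hedvd hN
  rw [← Finset.sum_filter, ← Finset.mul_sum]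
  have himg : ∑ k ∈ (range N).filter (e ∣ ·), z ^ k = ∑ j ∈ range (N / e), z ^ (e * j) := by
    apply Finset.sum_nbij' (fun k => k / e) (fun j => e * j)
    · intro k hk
      simp only [mem_filter, mem_range] at hk
      exact mem_range.mpr (Nat.div_lt_div_of_lt_of_dvd hedvd hk.1)
    · intro j hj
      simp only [mem_range] at hj
      refine mem_filter.mpr ⟨mem_range.mpr ?_, dvd_mul_right e j⟩
      exact (Nat.lt_div_iff_mul_lt' hedvd j).mp hj
    · intro k hk
      exact Nat.mul_div_cancel' (mem_filter.mp hk).2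
    · intro j _
      exact Nat.mul_div_cancel_left _ hepos
    · intro k hk
      rw [Nat.mul_div_cancel' (mem_filter.mp hk).2]
  rw [himg]
  by_cases hze : z ^ e = 1
  · simp only [pow_mul, hze, one_pow, Finset.sum_const, card_range, nsmul_eq_mul, mul_one, if_pos, Int.cast_mul, Int.cast_natCast]
  · simp only [hze, if_false, mul_zero, Int.cast_zero]
    have : ∀ j ∈ range (N/e), z ^ (e * j) = (z ^ e) ^ j := fun j _ => by rw [pow_mul]
    rw [Finset.sum_congr rfl this, geom_sum_eq hze, ← pow_mul, Nat.mul_div_cancel' hedvd, hz]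
    simp

lemma grset_eq (n d r : ℕ) (hdpos : 0 < d) (hdn : d ∣ n) :
    Grset n d r
      = ((range (n/d)).filter fun k => k % 4 = r ∧ Nat.gcd k (n/d) = 1).image (d * ·) := by
  have hdN : d * (n/d) = n := Nat.mul_div_cancel' hdn
  ext m
  simp only [Grset, mem_filter, mem_range, mem_image]
  constructor
  · rintro ⟨hmn, ⟨k, rfl⟩, hm4, hg⟩
    refine ⟨k, ⟨?_, ?_, ?_⟩, rfl⟩
    · have h2 : d * k < d * (n/d) := by rw [hdN]; exact hmn
      exact lt_of_mul_lt_mul_left h2 (Nat.zero_le d)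
    · rwa [Nat.mul_div_cancel_left _ hdpos] at hm4
    · rw [← hdN, Nat.gcd_mul_left] at hg
      exact Nat.eq_of_mul_eq_mul_left hdpos (hg.trans (mul_one d).symm)
  · rintro ⟨k, ⟨hkN, hk4, hg⟩, rfl⟩
    refine ⟨?_, dvd_mul_right d k, ?_, ?_⟩
    · rw [← hdN]; exact Nat.mul_lt_mul_left hdpos |>.mpr hkN
    · rw [Nat.mul_div_cancel_left _ hdpos]; exact hk4
    · rw [← hdN, Nat.gcd_mul_left, hg, mul_one]

theorem stmt7 (n d : ℕ) (hn : 0 < n) (h4 : n % 4 = 0) (hd : d ∣ n / 4)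
    (x : ℂ) (hx : x ^ n = 1) :
    ∃ z : ℤ, (∑ q ∈ Grset n d 1, Complex.I * x ^ q) -
      (∑ q ∈ Grset n d 3, Complex.I * x ^ q) = (z : ℂ) := by
  have hd4 : (4:ℕ) ∣ n := Nat.dvd_of_mod_eq_zero h4
  have hdn : d ∣ n := hd.trans (Nat.div_dvd_of_dvd hd4)
  have hdpos : 0 < d := Nat.pos_of_dvd_of_pos hdn hn
  set N := n / d with hNdef
  have hNpos : 0 < N := Nat.div_pos (Nat.le_of_dvd hn hdn) hdpos
  have hdN : d * N = n := Nat.mul_div_cancel' hdn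
  have h4N : (4:ℕ) ∣ N := by
    obtain ⟨c, hc⟩ := hd
    refine ⟨c, ?_⟩
    have hn' : n = d * (4 * c) := by rw [← Nat.div_mul_cancel hd4, hc]; ring
    rw [hNdef, hn', Nat.mul_div_cancel_left _ hdpos]
  have hI4 : Complex.I ^ 4 = 1 := by
    have := Complex.I_sq
    calc Complex.I ^ 4 = (Complex.I ^ 2) ^ 2 := by ring
    _ = 1 := by rw [this]; ring
  set z : ℂ := Complex.I * x ^ d with hzdef
  have hzN : z ^ N = 1 := by
    obtain ⟨t, ht⟩ := h4N
    rw [hzdef, mul_pow, ← pow_mul, hdN, hx, mul_one, ht, pow_mul, hI4, one_pow]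
  have hIk : ∀ k : ℕ, Complex.I ^ k = Complex.I ^ (k % 4) := by
    intro k
    conv_lhs => rw [← Nat.div_add_mod k 4]
    rw [pow_add, pow_mul, hI4, one_pow, one_mul]
  have hinj : ∀ a ∈ (range N).filter (fun k => k % 4 = 1 ∧ Nat.gcd k N = 1), ∀ b ∈
      (range N).filter (fun k => k % 4 = 1 ∧ Nat.gcd k N = 1), d * a = d * b → a = b :=
    fun a _ b _ h => Nat.eq_of_mul_eq_mul_left hdpos h
  have hs1 : ∑ q ∈ Grset n d 1, Complex.I * x ^ q
      = ∑ k ∈ (range N).filter (fun k => k % 4 = 1 ∧ Nat.gcd k N = 1), z ^ k := by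
    rw [grset_eq n d 1 hdpos hdn, Finset.sum_image (fun a _ b _ h => Nat.eq_of_mul_eq_mul_left hdpos h)]
    refine Finset.sum_congr rfl fun k hk => ?_
    have hk4 : k % 4 = 1 := (mem_filter.mp hk).2.1
    rw [hzdef, mul_pow, hIk k, hk4, pow_one, pow_mul]
  have hs3 : ∑ q ∈ Grset n d 3, Complex.I * x ^ q
      = -∑ k ∈ (range N).filter (fun k => k % 4 = 3 ∧ Nat.gcd k N = 1), z ^ k := by
    rw [grset_eq n d 3 hdpos hdn, Finset.sum_image (fun a _ b _ h => Nat.eq_of_mul_eq_mul_left hdpos h),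
      ← Finset.sum_neg_distrib]
    refine Finset.sum_congr rfl fun k hk => ?_
    have hk4 : k % 4 = 3 := (mem_filter.mp hk).2.1
    have hI3 : Complex.I ^ 3 = -Complex.I := by
      calc Complex.I ^ 3 = Complex.I ^ 2 * Complex.I := by ring
      _ = -Complex.I := by rw [Complex.I_sq]; ring
    rw [hzdef, mul_pow, hIk k, hk4, hI3, pow_mul]
    ring
  obtain ⟨m, hm⟩ := ram N hNpos z hzN
  refine ⟨m, ?_⟩
  rw [hs1, hs3, sub_neg_eq_add, ← hm]
  have hodd : ∀ k, Nat.gcd k N = 1 → k % 2 = 1 := by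
    intro k hk
    by_contra h
    have h2k : (2:ℕ) ∣ k := by omega
    have h2N : (2:ℕ) ∣ N := dvd_trans ⟨2, rfl⟩ h4N
    have := Nat.dvd_gcd h2k h2N
    rw [hk] at this
    exact absurd (Nat.le_of_dvd one_pos this) (by norm_num)
  have e1 : ((range N).filter fun k => Nat.gcd k N = 1).filter (fun k => k % 4 = 1)
      = (range N).filter (fun k => k % 4 = 1 ∧ Nat.gcd k N = 1) := by
    ext k; simp only [mem_filter, mem_range]; tauto
  have e3 : ((range N).filter fun k => Nat.gcd k N = 1).filter (fun k => ¬ k % 4 = 1)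
      = (range N).filter (fun k => k % 4 = 3 ∧ Nat.gcd k N = 1) := by
    ext k; simp only [mem_filter, mem_range]
    constructor
    · rintro ⟨⟨hkN, hg⟩, h41⟩; have := hodd k hg; exact ⟨hkN, by omega, hg⟩
    · rintro ⟨hkN, h43, hg⟩; exact ⟨⟨hkN, hg⟩, by omega⟩
  rw [← Finset.sum_filter_add_sum_filter_not ((range N).filter fun k => Nat.gcd k N = 1)
    (fun k => k % 4 = 1) (fun k => z ^ k), e1, e3]
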